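/- Poincaré inequality via measure-capacity: fix b ∈ S and a probability measure ν. If ν[A] ≤ C_var · cap(A,{b}) for all A ⊂ S\{b}, then Var_ν[f] ≤ 4 C_var · E(f) for all f ∈ ℓ²(μ). Conversely, if Var_ν[f] ≤ C_PI · E(f) for all f, then ν(b) · ν[A] ≤ C_PI · cap(A,{b}) for all A ⊂ S\{b}. -/

import Mathlib

open scoped ENNReal

/-- The Dirichlet form `E(f) = (1/2) ∑_{x,y} μ(x) p(x,y) (f(x) − f(y))²`. -/
noncomputable def dirichletForm {S : Type*} (μ : S → ℝ) (p : S → S → ℝ) (f : S → ℝ) : ℝ≥0∞ :=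
  (1/2 : ℝ≥0∞) * ∑' q : S × S, ENNReal.ofReal (μ q.1 * p q.1 q.2 * (f q.1 - f q.2) ^ 2)

/-- The capacity `cap(A,B) = inf{E(f) : f|_A = 1, f|_B = 0, 0 ≤ f ≤ 1}`. -/
noncomputable def capacity {S : Type*} (μ : S → ℝ) (p : S → S → ℝ) (A B : Set S) : ℝ≥0∞ :=
  ⨅ f : {f : S → ℝ // (∀ x ∈ A, f x = 1) ∧ (∀ x ∈ B, f x = 0) ∧ ∀ x, 0 ≤ f x ∧ f x ≤ 1},
    dirichletForm μ p f.1

/-- The measure of a set `A`, `ν[A] = ∑_{x ∈ A} ν(x)`, as a value in `[0,∞]`. -/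
noncomputable def measOf {S : Type*} (ν : S → ℝ) (A : Set S) : ℝ≥0∞ :=
  ∑' x : A, ENNReal.ofReal (ν x)

/-- Mean of `f` with respect to `ν`. -/
noncomputable def rMean {S : Type*} (ν : S → ℝ) (f : S → ℝ) : ℝ := ∑' x, ν x * f x

/-- Variance of `f` with respect to `ν`. -/
noncomputable def rVar {S : Type*} (ν : S → ℝ) (f : S → ℝ) : ℝ :=
  ∑' x, ν x * (f x - rMean ν f) ^ 2



open MeasureTheory Set

lemma two_sub_div_le_log {r : ℝ} (hr : 1 ≤ r) : 2*(r-1)/(r+1) ≤ Real.log r := by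
  have hmono : MonotoneOn (fun x : ℝ => Real.log x - 2*(x-1)/(x+1)) (Ici 1) := by
    have hasD : ∀ x : ℝ, 1 ≤ x →
        HasDerivAt (fun x : ℝ => Real.log x - 2*(x-1)/(x+1))
          (x⁻¹ - (2*1*(x+1) - 2*(x-1)*1) / (x+1)^2) x := by
      intro x hx
      have hx0 : x ≠ 0 := by intro h; rw [h] at hx; norm_num at hx
      have hx1 : x + 1 ≠ 0 := by intro h; nlinarith
      have := (Real.hasDerivAt_log hx0).sub
        ((((hasDerivAt_id x).sub_const 1).const_mul 2).div
          ((hasDerivAt_id x).add_const 1) hx1)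
      exact this
    apply monotoneOn_of_deriv_nonneg (convex_Ici 1)
    · apply ContinuousOn.sub
      · exact Real.continuousOn_log.mono (fun x hx => by
          simp only [mem_Ici] at hx; simp only [mem_compl_iff, mem_singleton_iff]
          intro h; rw [h] at hx; norm_num at hx)
      · apply ContinuousOn.div (by fun_prop) (by fun_prop)
        intro x hx; simp only [mem_Ici] at hx; intro h; nlinarith
    · intro x hx
      rw [interior_Ici] at hx
      exact (hasD x (le_of_lt hx)).differentiableAt.differentiableWithinAt
    · intro x hx
      rw [interior_Ici] at hx
      rw [(hasD x (le_of_lt hx)).deriv]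
      have hx0 : (0:ℝ) < x := by linarith [mem_Ioi.mp hx]
      have hx1 : (0:ℝ) < x + 1 := by linarith
      have hx2 : (0:ℝ) < (x+1)^2 := by positivity
      rw [sub_nonneg, div_le_iff₀ hx2]
      rw [inv_mul_eq_div, le_div_iff₀ hx0]
      nlinarith [sq_nonneg (x - 1)]
  have h0 : (fun x : ℝ => Real.log x - 2*(x-1)/(x+1)) 1 ≤
      (fun x : ℝ => Real.log x - 2*(x-1)/(x+1)) r :=
    hmono (by simp) (mem_Ici.mpr hr) hr
  simp only [Real.log_one] at h0
  norm_num at h0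
  linarith

/-- Square splitting: `t² = (t⁺)² + (t⁻)²`. -/


lemma sq_eq_possq_add_negsq (t : ℝ) : t^2 = (max t 0)^2 + (max (-t) 0)^2 := by
  rcases le_total t 0 with h | h
  · rw [max_eq_right h, max_eq_left (by linarith)]; ring
  · rw [max_eq_left h, max_eq_right (by linarith)]; ring

/-- Contraction of positive/negative parts. -/


lemma possq_add_negsq_le (s t : ℝ) :
    (max s 0 - max t 0)^2 + (max (-s) 0 - max (-t) 0)^2 ≤ (s - t)^2 := by
  rcases le_total s 0 with hs | hs <;> rcases le_total t 0 with ht | ht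
  · rw [max_eq_right hs, max_eq_right ht, max_eq_left (by linarith), max_eq_left (by linarith)]
    nlinarith
  · rw [max_eq_right hs, max_eq_left ht, max_eq_left (by linarith), max_eq_right (by linarith)]
    nlinarith
  · rw [max_eq_left hs, max_eq_right ht, max_eq_right (by linarith), max_eq_left (by linarith)]
    nlinarith
  · rw [max_eq_left hs, max_eq_left ht, max_eq_right (by linarith), max_eq_right (by linarith)]
    nlinarith


lemma max_sq_le (t : ℝ) : (max t 0)^2 ≤ t^2 := by
  rcases le_total t 0 with h | h
  · rw [max_eq_right h]; simpa using sq_nonneg t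
  · rw [max_eq_left h]


lemma tail_lintegral {a c : ℝ} (ha : 0 < a) (hc : 0 ≤ c) :
    ∫⁻ s in Ioi a, ENNReal.ofReal (c/s^2) = ENNReal.ofReal (c/a) := by
  have hderiv : ∀ x ∈ Ioi a, HasDerivAt (fun s : ℝ => -(c/s)) (c/x^2) x := by
    intro x hx
    have hx0 : x ≠ 0 := ne_of_gt (lt_trans ha (mem_Ioi.mp hx))
    have h1 : HasDerivAt (fun s : ℝ => -(c * s⁻¹)) (-(c * -(x^2)⁻¹)) x :=
      ((hasDerivAt_inv hx0).const_mul c).neg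
    have h2 : -(c * -(x^2)⁻¹) = c/x^2 := by field_simp
    have h3 : (fun s : ℝ => -(c * s⁻¹)) = (fun s : ℝ => -(c/s)) := by
      funext s; rw [div_eq_mul_inv]
    rw [h2, h3] at h1; exact h1
  have hnn : ∀ x ∈ Ioi a, 0 ≤ c/x^2 := fun x _ => div_nonneg hc (sq_nonneg x)
  have hcont : ContinuousWithinAt (fun s : ℝ => -(c/s)) (Ici a) a :=
    (((continuousAt_const (y := c)).div continuousAt_id (ne_of_gt ha)).neg).continuousWithinAt
  have htend : Filter.Tendsto (fun s : ℝ => -(c/s)) Filter.atTop (nhds 0) := by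
    have := (Filter.Tendsto.div_atTop (tendsto_const_nhds (x := c)) Filter.tendsto_id).neg
    simpa using this
  have hint : IntegrableOn (fun x : ℝ => c/x^2) (Ioi a) volume :=
    integrableOn_Ioi_deriv_of_nonneg hcont hderiv hnn htend
  have hval : ∫ x in Ioi a, c/x^2 = 0 - (-(c/a)) :=
    integral_Ioi_of_hasDerivAt_of_nonneg hcont hderiv hnn htend
  rw [← ofReal_integral_eq_lintegral_ofReal hint
      (Filter.Eventually.of_forall (fun x => div_nonneg hc (sq_nonneg x))), hval]
  norm_num


lemma core_integral {u v : ℝ} (hv : 0 ≤ v) (hvu : v ≤ u) :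
    ∫⁻ s in Ioi (0:ℝ), ENNReal.ofReal ((min 1 (u^2/s) - min 1 (v^2/s))^2)
      ≤ ENNReal.ofReal (4*(u-v)^2) := by
  rcases eq_or_lt_of_le hvu with heq | hlt
  · subst heq
    have h0 : ∀ s : ℝ, ENNReal.ofReal ((min 1 (v^2/s) - min 1 (v^2/s))^2) = 0 := by
      intro s; simp
    simp only [h0, lintegral_zero]
    exact zero_le
  · have hu : 0 < u := lt_of_le_of_lt hv hlt
    have hB : 0 < u^2 := by positivity
    have hdom : Ioi (0:ℝ) = Ioc 0 (u^2) ∪ Ioi (u^2) := (Ioc_union_Ioi_eq_Ioi hB.le).symm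
    rcases eq_or_lt_of_le hv with hv0 | hv0
    · -- v = 0
      have hv0' : v = 0 := hv0.symm
      subst hv0'
      rw [hdom, lintegral_union measurableSet_Ioi (Ioc_disjoint_Ioi le_rfl)]
      have hP1 : ∫⁻ s in Ioc (0:ℝ) (u^2), ENNReal.ofReal ((min 1 (u^2/s) - min 1 (0^2/s))^2)
          = ENNReal.ofReal (u^2) := by
        rw [setLIntegral_congr_fun measurableSet_Ioc
          (fun s hs => ?_), setLIntegral_const, one_mul,
          Real.volume_Ioc, sub_zero]
        have hs0 : 0 < s := hs.1
        have h1 : min 1 (u^2/s) = 1 := min_eq_left (by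
          rw [le_div_iff₀ hs0]; simpa using hs.2)
        have h2 : min 1 ((0:ℝ)^2/s) = 0 := by norm_num
        rw [h1, h2]; norm_num
      have hP2 : ∫⁻ s in Ioi (u^2), ENNReal.ofReal ((min 1 (u^2/s) - min 1 (0^2/s))^2)
          = ENNReal.ofReal (u^2) := by
        have hcg : ∫⁻ s in Ioi (u^2), ENNReal.ofReal ((min 1 (u^2/s) - min 1 (0^2/s))^2)
            = ∫⁻ s in Ioi (u^2), ENNReal.ofReal ((u^2)^2/s^2) := by
          refine setLIntegral_congr_fun measurableSet_Ioi
            (fun s hs => ?_)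
          have hsB : u^2 < s := hs
          have hs0 : 0 < s := lt_trans hB hsB
          have h1 : min 1 (u^2/s) = u^2/s := min_eq_right (by
            rw [div_le_one hs0]; exact le_of_lt hsB)
          have h2 : min 1 ((0:ℝ)^2/s) = 0 := by norm_num
          rw [h1, h2, sub_zero, div_pow]
        rw [hcg, tail_lintegral hB (sq_nonneg _)]
        congr 1
        field_simp
      rw [hP1, hP2, ← ENNReal.ofReal_add hB.le hB.le]
      apply ENNReal.ofReal_le_ofReal
      nlinarith
    · -- 0 < v < u
      have hA : 0 < v^2 := by positivity
      have hAB : v^2 < u^2 := by nlinarith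
      rw [hdom, lintegral_union measurableSet_Ioi (Ioc_disjoint_Ioi le_rfl)]
      have hdom2 : Ioc (0:ℝ) (u^2) = Ioc 0 (v^2) ∪ Ioc (v^2) (u^2) :=
        (Ioc_union_Ioc_eq_Ioc hA.le hAB.le).symm
      rw [hdom2, lintegral_union measurableSet_Ioc (Ioc_disjoint_Ioc_of_le le_rfl)]
      set F : ℝ → ℝ := fun s => s - 2*v^2*Real.log s - (v^2)^2/s with hFdef
      -- FTC for the middle piece
      have hderiv : ∀ s ∈ uIcc (v^2) (u^2), HasDerivAt F ((1 - v^2/s)^2) s := by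
        intro s hs
        rw [uIcc_of_le hAB.le] at hs
        have hs0 : (0:ℝ) < s := lt_of_lt_of_le hA hs.1
        have h1 : HasDerivAt F (1 - 2*v^2*s⁻¹ - (v^2)^2 * -(s^2)⁻¹) s := by
          refine ((hasDerivAt_id s).sub ((Real.hasDerivAt_log (ne_of_gt hs0)).const_mul
            (2*v^2))).sub ?_
          have h2 := (hasDerivAt_inv (ne_of_gt hs0)).const_mul ((v^2)^2)
          have heq : (fun s : ℝ => (v^2)^2 * s⁻¹) = fun s : ℝ => (v^2)^2/s := by
            funext t; rw [div_eq_mul_inv]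
          rwa [heq] at h2
        have heq2 : 1 - 2*v^2*s⁻¹ - (v^2)^2 * -(s^2)⁻¹ = (1 - v^2/s)^2 := by
          field_simp; ring
        rwa [heq2] at h1
      have hii : IntervalIntegrable (fun s : ℝ => (1 - v^2/s)^2) volume (v^2) (u^2) := by
        apply ContinuousOn.intervalIntegrable
        apply ContinuousOn.pow
        apply (continuousOn_const).sub
        apply ContinuousOn.div continuousOn_const continuousOn_id
        intro s hs
        rw [uIcc_of_le hAB.le] at hs
        exact ne_of_gt (lt_of_lt_of_le hA hs.1)
      have hftc := intervalIntegral.integral_eq_sub_of_hasDerivAt hderiv hii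
      have hpos : 0 ≤ F (u^2) - F (v^2) := by
        rw [← hftc]
        apply intervalIntegral.integral_nonneg hAB.le
        intro s _; exact sq_nonneg _
      rw [intervalIntegral.integral_of_le hAB.le] at hftc
      -- Piece 1 : zero
      have hP1 : ∫⁻ s in Ioc (0:ℝ) (v^2), ENNReal.ofReal ((min 1 (u^2/s) - min 1 (v^2/s))^2)
          = 0 := by
        rw [setLIntegral_congr_fun measurableSet_Ioc
          (fun s hs => ?_), lintegral_zero]
        have hs0 : 0 < s := hs.1
        have h1 : min 1 (u^2/s) = 1 := min_eq_left (by
          rw [le_div_iff₀ hs0]; have := hs.2; simp only [one_mul]; nlinarith)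
        have h2 : min 1 (v^2/s) = 1 := min_eq_left (by
          rw [le_div_iff₀ hs0]; have := hs.2; simpa using this)
        rw [h1, h2]; norm_num
      -- Piece 2
      have hP2 : ∫⁻ s in Ioc (v^2) (u^2), ENNReal.ofReal ((min 1 (u^2/s) - min 1 (v^2/s))^2)
          = ENNReal.ofReal (F (u^2) - F (v^2)) := by
        have hcg : ∀ s ∈ Ioc (v^2) (u^2), ENNReal.ofReal ((min 1 (u^2/s) - min 1 (v^2/s))^2)
            = ENNReal.ofReal ((1 - v^2/s)^2) := by
          intro s hs
          have hsA : v^2 < s := hs.1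
          have hs0 : 0 < s := lt_trans hA hsA
          have h1 : min 1 (u^2/s) = 1 := min_eq_left (by
            rw [le_div_iff₀ hs0]; have := hs.2; simpa using this)
          have h2 : min 1 (v^2/s) = v^2/s := min_eq_right (by
            rw [div_le_one hs0]; exact le_of_lt hsA)
          rw [h1, h2]
        rw [setLIntegral_congr_fun measurableSet_Ioc hcg]
        have hint : IntegrableOn (fun s : ℝ => (1 - v^2/s)^2) (Ioc (v^2) (u^2)) volume := by
          rw [← intervalIntegrable_iff_integrableOn_Ioc_of_le hAB.le]; exact hii
        rw [← ofReal_integral_eq_lintegral_ofReal hint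
          (Filter.Eventually.of_forall (fun s => sq_nonneg _)), hftc]
      -- Piece 3
      have hP3 : ∫⁻ s in Ioi (u^2), ENNReal.ofReal ((min 1 (u^2/s) - min 1 (v^2/s))^2)
          = ENNReal.ofReal ((u^2-v^2)^2/(u^2)) := by
        have hcg : ∫⁻ s in Ioi (u^2), ENNReal.ofReal ((min 1 (u^2/s) - min 1 (v^2/s))^2)
            = ∫⁻ s in Ioi (u^2), ENNReal.ofReal ((u^2-v^2)^2/s^2) := by
          refine setLIntegral_congr_fun measurableSet_Ioi
            (fun s hs => ?_)
          have hsB : u^2 < s := hs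
          have hs0 : 0 < s := lt_trans hB hsB
          have h1 : min 1 (u^2/s) = u^2/s := min_eq_right (by
            rw [div_le_one hs0]; exact le_of_lt hsB)
          have h2 : min 1 (v^2/s) = v^2/s := min_eq_right (by
            rw [div_le_one hs0]; exact le_of_lt (lt_trans hAB hsB))
          rw [h1, h2, div_sub_div_same, div_pow]
        rw [hcg, tail_lintegral hB (sq_nonneg _)]
      rw [hP1, hP2, hP3, zero_add]
      -- final arithmetic
      have hFBA : F (u^2) - F (v^2) = 2*(u^2-v^2) - 2*v^2*(Real.log (u^2) - Real.log (v^2))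
          - (u^2-v^2)^2/(u^2) := by
        simp only [hFdef]
        field_simp
        ring
      have hlog : 2*(u^2-v^2)/(u^2+v^2) ≤ Real.log (u^2) - Real.log (v^2) := by
        have hr : 1 ≤ u^2/v^2 := (one_le_div hA).mpr hAB.le
        have hl := two_sub_div_le_log hr
        rw [Real.log_div (ne_of_gt hB) (ne_of_gt hA)] at hl
        have heq : 2*(u^2/v^2-1)/(u^2/v^2+1) = 2*(u^2-v^2)/(u^2+v^2) := by
          rw [div_eq_div_iff (by positivity) (by positivity)]
          field_simp
        rwa [heq] at hl
      rw [← ENNReal.ofReal_add hpos (by positivity)]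
      apply ENNReal.ofReal_le_ofReal
      rw [hFBA]
      have h5 : 0 ≤ 2*v^2*(Real.log (u^2) - Real.log (v^2)) - 2*v^2*(2*(u^2-v^2)/(u^2+v^2)) := by
        have := mul_le_mul_of_nonneg_left hlog (by positivity : (0:ℝ) ≤ 2*v^2)
        linarith
      have h6 : 2*(u^2-v^2) - 2*v^2*(2*(u^2-v^2)/(u^2+v^2)) ≤ 4*(u-v)^2 := by
        rw [show 2*(u^2-v^2) - 2*v^2*(2*(u^2-v^2)/(u^2+v^2))
            = (2*(u^2-v^2)*(u^2+v^2) - 4*v^2*(u^2-v^2))/(u^2+v^2) from by field_simp; ring,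
          div_le_iff₀ (by positivity : (0:ℝ) < u^2+v^2)]
        nlinarith [sq_nonneg ((u-v)^2), sq_nonneg (u-v), sq_nonneg (u+v)]
      linarith


lemma edge_integral {u v : ℝ} (hu : 0 ≤ u) (hv : 0 ≤ v) :
    ∫⁻ s in Ioi (0:ℝ), ENNReal.ofReal ((min 1 (u^2/s) - min 1 (v^2/s))^2)
      ≤ ENNReal.ofReal (4*(u-v)^2) := by
  rcases le_total v u with hc | hc
  · exact core_integral hv hc
  · have h1 : ∀ s : ℝ, ((min 1 (u^2/s) - min 1 (v^2/s))^2 : ℝ)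
        = (min 1 (v^2/s) - min 1 (u^2/s))^2 := fun s => by ring
    have h2 : (4*(u-v)^2 : ℝ) = 4*(v-u)^2 := by ring
    simp only [h1, h2]
    exact core_integral hu hc

/-- Forward workhorse: weighted L² bound for nonnegative `h` vanishing at `b`. -/


lemma main_l2 {S : Type*} [Countable S] (μ : S → ℝ) (p : S → S → ℝ) (ν : S → ℝ)
    (hν : ∀ x, 0 ≤ ν x) (hμ : ∀ x, 0 ≤ μ x) (hp : ∀ x y, 0 ≤ p x y) (b : S) (Cvar : ℝ≥0∞)
    (hcap : ∀ A : Set S, A ⊆ {b}ᶜ → measOf ν A ≤ Cvar * capacity μ p A {b})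
    (h : S → ℝ) (hh0 : ∀ x, 0 ≤ h x) (hhb : h b = 0)
    (hsum : Summable (fun x => ν x * h x ^ 2)) :
    ENNReal.ofReal (∑' x, ν x * h x ^ 2) ≤ 4 * Cvar * dirichletForm μ p h := by
  -- step 1 : layer-cake representation of the left side
  have step1 : ENNReal.ofReal (∑' x, ν x * h x ^ 2)
      = ∫⁻ s in Ioi (0:ℝ), ∑' x : S,
          ENNReal.ofReal (ν x) * (Iio (h x ^ 2)).indicator (fun _ => (1:ℝ≥0∞)) s := by
    have e1 : ∀ x : S, ENNReal.ofReal (ν x * h x ^ 2) = ∫⁻ s in Ioi (0:ℝ),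
        ENNReal.ofReal (ν x) * (Iio (h x ^ 2)).indicator (fun _ => (1:ℝ≥0∞)) s := by
      intro x
      rw [lintegral_const_mul' _ _ ENNReal.ofReal_ne_top,
        lintegral_indicator measurableSet_Iio, setLIntegral_one, Measure.restrict_apply
        measurableSet_Iio, Iio_inter_Ioi, Real.volume_Ioo,
        ENNReal.ofReal_mul (hν x), sub_zero]
    have hf : ∀ x : S, AEMeasurable (fun s : ℝ =>
        ENNReal.ofReal (ν x) * (Iio (h x ^ 2)).indicator (fun _ => (1:ℝ≥0∞)) s)
        (volume.restrict (Ioi (0:ℝ))) := fun x =>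
      (((measurable_const (a := (1:ℝ≥0∞))).indicator measurableSet_Iio).const_mul
        (ENNReal.ofReal (ν x))).aemeasurable
    exact (ENNReal.ofReal_tsum_of_nonneg (fun x => mul_nonneg (hν x) (sq_nonneg _)) hsum).trans
      ((tsum_congr e1).trans (lintegral_tsum hf).symm)
  -- step 2 : pointwise measure-capacity bound at each level
  have step2 : ∀ s : ℝ, s ∈ Ioi (0:ℝ) →
      (∑' x : S, ENNReal.ofReal (ν x) * (Iio (h x ^ 2)).indicator (fun _ => (1:ℝ≥0∞)) s)
        ≤ Cvar * dirichletForm μ p (fun y => min 1 (h y ^ 2 / s)) := by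
    intro s hs
    have hs0 : 0 < s := hs
    have hmeas : (∑' x : S, ENNReal.ofReal (ν x) *
        (Iio (h x ^ 2)).indicator (fun _ => (1:ℝ≥0∞)) s) = measOf ν {x | s < h x ^ 2} := by
      simp only [measOf]
      rw [tsum_subtype {x | s < h x ^ 2} (fun x => ENNReal.ofReal (ν x))]
      refine tsum_congr (fun x => ?_)
      by_cases hx : s < h x ^ 2
      · rw [Set.indicator_of_mem (by exact hx) (fun _ => (1:ℝ≥0∞)), mul_one,
          Set.indicator_of_mem (by exact hx) (fun x => ENNReal.ofReal (ν x))]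
      · rw [Set.indicator_of_notMem (by exact hx) (fun _ => (1:ℝ≥0∞)), mul_zero,
          Set.indicator_of_notMem (by exact hx) (fun x => ENNReal.ofReal (ν x))]
    rw [hmeas]
    have hsubset : {x | s < h x ^ 2} ⊆ ({b}ᶜ : Set S) := by
      intro x hx hxb
      rw [mem_singleton_iff] at hxb
      subst hxb
      simp only [mem_setOf_eq, hhb] at hx
      nlinarith [hx]
    refine le_trans (hcap _ hsubset) (mul_le_mul_right ?_ _)
    refine iInf_le_of_le ⟨fun y => min 1 (h y ^ 2 / s), ?_, ?_, ?_⟩ le_rfl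
    · intro x hx
      simp only [mem_setOf_eq] at hx
      exact min_eq_left ((le_div_iff₀ hs0).mpr (by linarith))
    · intro x hx
      rw [mem_singleton_iff] at hx
      subst hx
      simp only [hhb]
      norm_num
    · intro x
      constructor
      · exact le_min (by norm_num) (div_nonneg (sq_nonneg _) hs0.le)
      · exact min_le_left _ _
  -- step 3 : measurability of the level-energy function
  have hGmeas : Measurable (fun s : ℝ => dirichletForm μ p (fun y => min 1 (h y ^ 2 / s))) := by
    simp only [dirichletForm]
    refine Measurable.const_mul ?_ _
    refine Measurable.ennreal_tsum (fun q => ?_)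
    refine Measurable.ennreal_ofReal ?_
    refine Measurable.const_mul ?_ _
    refine Measurable.pow_const ?_ _
    exact (measurable_const.min (measurable_const.div measurable_id)).sub
      (measurable_const.min (measurable_const.div measurable_id))
  -- assemble
  rw [step1]
  refine le_trans (lintegral_mono_ae ((ae_restrict_iff' measurableSet_Ioi).mpr
    (Filter.Eventually.of_forall step2))) ?_
  rw [lintegral_const_mul _ hGmeas]
  have step4 : ∫⁻ s in Ioi (0:ℝ), dirichletForm μ p (fun y => min 1 (h y ^ 2 / s))
      ≤ 4 * dirichletForm μ p h := by
    simp only [dirichletForm]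
    rw [lintegral_const_mul' _ _ (by norm_num : (1/2 : ℝ≥0∞) ≠ ⊤)]
    have hfq : ∀ q : S × S, AEMeasurable (fun s : ℝ => ENNReal.ofReal (μ q.1 * p q.1 q.2 *
        (min 1 (h q.1 ^ 2 / s) - min 1 (h q.2 ^ 2 / s)) ^ 2)) (volume.restrict (Ioi (0:ℝ))) := by
      intro q
      refine (Measurable.ennreal_ofReal ?_).aemeasurable
      refine Measurable.const_mul ?_ _
      refine Measurable.pow_const ?_ _
      exact (measurable_const.min (measurable_const.div measurable_id)).sub
        (measurable_const.min (measurable_const.div measurable_id))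
    rw [lintegral_tsum hfq]
    have hedge : ∀ q : S × S,
        ∫⁻ s in Ioi (0:ℝ), ENNReal.ofReal (μ q.1 * p q.1 q.2 *
          (min 1 (h q.1 ^ 2 / s) - min 1 (h q.2 ^ 2 / s)) ^ 2)
        ≤ 4 * ENNReal.ofReal (μ q.1 * p q.1 q.2 * (h q.1 - h q.2) ^ 2) := by
      intro q
      have hc : 0 ≤ μ q.1 * p q.1 q.2 := mul_nonneg (hμ _) (hp _ _)
      have hpt : ∀ s : ℝ, ENNReal.ofReal (μ q.1 * p q.1 q.2 *
          (min 1 (h q.1 ^ 2 / s) - min 1 (h q.2 ^ 2 / s)) ^ 2)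
          = ENNReal.ofReal (μ q.1 * p q.1 q.2) *
            ENNReal.ofReal ((min 1 (h q.1 ^ 2 / s) - min 1 (h q.2 ^ 2 / s)) ^ 2) :=
        fun s => ENNReal.ofReal_mul hc
      simp only [hpt]
      rw [lintegral_const_mul' _ _ ENNReal.ofReal_ne_top]
      refine le_trans (mul_le_mul_right (edge_integral (hh0 q.1) (hh0 q.2)) _) ?_
      rw [← ENNReal.ofReal_mul hc]
      rw [show μ q.1 * p q.1 q.2 * (4*(h q.1 - h q.2)^2)
          = 4 * (μ q.1 * p q.1 q.2 * (h q.1 - h q.2)^2) from by ring]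
      rw [ENNReal.ofReal_mul (by norm_num : (0:ℝ) ≤ 4), ENNReal.ofReal_ofNat]
    calc (1/2 : ℝ≥0∞) * ∑' q : S × S, ∫⁻ s in Ioi (0:ℝ),
          ENNReal.ofReal (μ q.1 * p q.1 q.2 *
            (min 1 (h q.1 ^ 2 / s) - min 1 (h q.2 ^ 2 / s)) ^ 2)
        ≤ (1/2 : ℝ≥0∞) * ∑' q : S × S,
            4 * ENNReal.ofReal (μ q.1 * p q.1 q.2 * (h q.1 - h q.2) ^ 2) :=
          mul_le_mul_right (ENNReal.tsum_le_tsum hedge) _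
      _ = 4 * ((1/2 : ℝ≥0∞) * ∑' q : S × S,
            ENNReal.ofReal (μ q.1 * p q.1 q.2 * (h q.1 - h q.2) ^ 2)) := by
          rw [ENNReal.tsum_mul_left]
          ring
  calc Cvar * ∫⁻ s in Ioi (0:ℝ), dirichletForm μ p (fun y => min 1 (h y ^ 2 / s))
      ≤ Cvar * (4 * dirichletForm μ p h) := mul_le_mul_right step4 _
    _ = 4 * Cvar * dirichletForm μ p h := by ring


lemma forward_dir {S : Type*} [Countable S] (μ : S → ℝ) (p : S → S → ℝ)
    (hμ : ∀ x, 0 ≤ μ x) (hp : ∀ x y, 0 ≤ p x y)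
    (ν : S → ℝ) (hν : ∀ x, 0 ≤ ν x) (hνs : Summable ν) (hν1 : ∑' x, ν x = 1)
    (b : S) (Cvar : ℝ≥0∞)
    (hcap : ∀ A : Set S, A ⊆ {b}ᶜ → measOf ν A ≤ Cvar * capacity μ p A {b})
    (f : S → ℝ) (hνf : Summable (fun x => ν x * f x))
    (hνf2 : Summable (fun x => ν x * f x ^ 2)) :
    ENNReal.ofReal (rVar ν f) ≤ 4 * Cvar * dirichletForm μ p f := by
  set c := f b with hc
  set m := rMean ν f with hm
  have hSc : Summable (fun x => ν x * (f x - c)^2) := by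
    have he : (fun x => ν x * (f x - c)^2)
        = fun x => (ν x * f x^2 - (2*c) * (ν x * f x)) + c^2 * ν x := by
      funext x; ring
    rw [he]
    exact (hνf2.sub (hνf.mul_left (2*c))).add (hνs.mul_left (c^2))
  have hSm : Summable (fun x => ν x * (f x - m)^2) := by
    have he : (fun x => ν x * (f x - m)^2)
        = fun x => (ν x * f x^2 - (2*m) * (ν x * f x)) + m^2 * ν x := by
      funext x; ring
    rw [he]
    exact (hνf2.sub (hνf.mul_left (2*m))).add (hνs.mul_left (m^2))
  have hplus : Summable (fun x => ν x * (max (f x - c) 0)^2) :=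
    Summable.of_nonneg_of_le (fun x => mul_nonneg (hν x) (sq_nonneg _))
      (fun x => mul_le_mul_of_nonneg_left (max_sq_le _) (hν x)) hSc
  have hminus : Summable (fun x => ν x * (max (c - f x) 0)^2) := by
    refine Summable.of_nonneg_of_le (fun x => mul_nonneg (hν x) (sq_nonneg _))
      (fun x => ?_) hSc
    have h1 := mul_le_mul_of_nonneg_left (max_sq_le (c - f x)) (hν x)
    have h2 : (c - f x)^2 = (f x - c)^2 := by ring
    rw [h2] at h1; exact h1
  -- variance is dominated by second moment around c
  have hvar : rVar ν f ≤ ∑' x, ν x * (f x - c)^2 := by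
    have hdec : ∀ x : S, ν x * (f x - c)^2
        = ν x * (f x - m)^2 + ((2*(m-c)) * (ν x * f x) + ((m-c)^2 - 2*m*(m-c)) * ν x) := by
      intro x; ring
    have hT2 : Summable (fun x => (2*(m-c)) * (ν x * f x)) := hνf.mul_left _
    have hT3 : Summable (fun x => ((m-c)^2 - 2*m*(m-c)) * ν x) := hνs.mul_left _
    have hsum2 : ∑' x, ν x * (f x - c)^2
        = (∑' x, ν x * (f x - m)^2) + ((∑' x, (2*(m-c)) * (ν x * f x))
            + ∑' x, ((m-c)^2 - 2*m*(m-c)) * ν x) := by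
      rw [← Summable.tsum_add hT2 hT3, ← Summable.tsum_add hSm (hT2.add hT3)]
      exact tsum_congr hdec
    rw [hsum2, tsum_mul_left, tsum_mul_left, hν1]
    have hmean : ∑' x, ν x * f x = m := hm.symm
    rw [hmean]
    have : rVar ν f = ∑' x, ν x * (f x - m)^2 := by rw [rVar, hm]
    rw [this]
    nlinarith [sq_nonneg (m - c)]
  -- split into positive and negative parts
  have hsplit : ∑' x, ν x * (f x - c)^2
      = (∑' x, ν x * (max (f x - c) 0)^2) + ∑' x, ν x * (max (c - f x) 0)^2 := by
    rw [← Summable.tsum_add hplus hminus]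
    refine tsum_congr (fun x => ?_)
    have h1 := sq_eq_possq_add_negsq (f x - c)
    rw [neg_sub] at h1
    rw [h1]; ring
  -- apply the L² lemma to both parts
  have h1 := main_l2 μ p ν hν hμ hp b Cvar hcap (fun x => max (f x - c) 0)
    (fun x => le_max_right _ _) (by simp [hc]) hplus
  have h2 := main_l2 μ p ν hν hμ hp b Cvar hcap (fun x => max (c - f x) 0)
    (fun x => le_max_right _ _) (by simp [hc]) hminus
  -- energies of the two parts add up to at most the energy of f
  have hE : dirichletForm μ p (fun x => max (f x - c) 0)
      + dirichletForm μ p (fun x => max (c - f x) 0) ≤ dirichletForm μ p f := by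
    simp only [dirichletForm]
    rw [← mul_add, ← ENNReal.tsum_add]
    refine mul_le_mul_right (ENNReal.tsum_le_tsum (fun q => ?_)) _
    have hcq : 0 ≤ μ q.1 * p q.1 q.2 := mul_nonneg (hμ _) (hp _ _)
    rw [← ENNReal.ofReal_add (mul_nonneg hcq (sq_nonneg _)) (mul_nonneg hcq (sq_nonneg _)),
      ← mul_add]
    apply ENNReal.ofReal_le_ofReal
    refine mul_le_mul_of_nonneg_left ?_ hcq
    have key := possq_add_negsq_le (f q.1 - c) (f q.2 - c)
    rw [neg_sub, neg_sub] at key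
    have heq : f q.1 - c - (f q.2 - c) = f q.1 - f q.2 := by ring
    rw [heq] at key
    exact key
  calc ENNReal.ofReal (rVar ν f)
      ≤ ENNReal.ofReal (∑' x, ν x * (f x - c)^2) := ENNReal.ofReal_le_ofReal hvar
    _ = ENNReal.ofReal (∑' x, ν x * (max (f x - c) 0)^2)
        + ENNReal.ofReal (∑' x, ν x * (max (c - f x) 0)^2) := by
        rw [hsplit, ENNReal.ofReal_add (tsum_nonneg (fun x => mul_nonneg (hν x) (sq_nonneg _)))
          (tsum_nonneg (fun x => mul_nonneg (hν x) (sq_nonneg _)))]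
    _ ≤ 4 * Cvar * dirichletForm μ p (fun x => max (f x - c) 0)
        + 4 * Cvar * dirichletForm μ p (fun x => max (c - f x) 0) := add_le_add h1 h2
    _ = 4 * Cvar * (dirichletForm μ p (fun x => max (f x - c) 0)
        + dirichletForm μ p (fun x => max (c - f x) 0)) := (mul_add _ _ _).symm
    _ ≤ 4 * Cvar * dirichletForm μ p f := mul_le_mul_right hE _


lemma reach_pos {S : Type*} [Countable S] (μ : S → ℝ) (p : S → S → ℝ) (b y : S)
    (hy : Relation.ReflTransGen (fun x y => 0 < μ x * p x y) b y) :
    ∃ ε : ℝ, 0 < ε ∧ ∀ f : S → ℝ, f b = 0 → (∀ z, 0 ≤ f z ∧ f z ≤ 1) →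
      ENNReal.ofReal (ε * f y ^ 2) ≤ dirichletForm μ p f := by
  induction hy with
  | refl => exact ⟨1, one_pos, fun f hfb _ => by rw [one_mul, hfb]; simp⟩
  | @tail y' z hab hyz ih =>
    obtain ⟨ε, hε, hind⟩ := ih
    have hcq : 0 < μ y' * p y' z := hyz
    refine ⟨min (ε/2) ((μ y' * p y' z)/4) / 2,
      div_pos (lt_min_iff.mpr ⟨by linarith, by linarith⟩) two_pos, fun f hfb hf01 => ?_⟩
    have hX := hind f hfb hf01
    have hY : (2⁻¹ : ℝ≥0∞) * ENNReal.ofReal (μ y' * p y' z * (f y' - f z)^2)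
        ≤ dirichletForm μ p f := by
      have hle := ENNReal.le_tsum (f := fun q : S × S =>
        ENNReal.ofReal (μ q.1 * p q.1 q.2 * (f q.1 - f q.2)^2)) (y', z)
      calc (2⁻¹ : ℝ≥0∞) * ENNReal.ofReal (μ y' * p y' z * (f y' - f z)^2)
          ≤ 2⁻¹ * ∑' q : S × S, ENNReal.ofReal (μ q.1 * p q.1 q.2 * (f q.1 - f q.2)^2) :=
            mul_le_mul_right hle _
        _ = dirichletForm μ p f := by rw [dirichletForm, one_div]
    set ε' := min (ε/2) ((μ y' * p y' z)/4) with hε'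
    have hε'0 : 0 ≤ ε' := le_min (by linarith) (by linarith)
    have hreal : ε' * f z ^ 2 ≤ ε * f y' ^ 2 + (μ y' * p y' z * (f y' - f z)^2)/2 := by
      have h1 : ε' ≤ ε/2 := min_le_left _ _
      have h2 : ε' ≤ (μ y' * p y' z)/4 := min_le_right _ _
      have h3 : f z ^ 2 ≤ 2 * f y' ^ 2 + 2 * (f y' - f z)^2 := by
        nlinarith [sq_nonneg (2 * f y' - f z)]
      nlinarith [sq_nonneg (f y' - f z), sq_nonneg (f y'),
        mul_le_mul_of_nonneg_right h1 (sq_nonneg (f y')),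
        mul_le_mul_of_nonneg_right h2 (sq_nonneg (f y' - f z)),
        mul_le_mul_of_nonneg_left h3 hε'0]
    have hZ2 : ENNReal.ofReal (ε' * f z ^ 2) ≤ 2 * dirichletForm μ p f := by
      calc ENNReal.ofReal (ε' * f z ^ 2)
          ≤ ENNReal.ofReal (ε * f y' ^ 2 + (μ y' * p y' z * (f y' - f z)^2)/2) :=
            ENNReal.ofReal_le_ofReal hreal
        _ = ENNReal.ofReal (ε * f y' ^ 2)
            + ENNReal.ofReal ((μ y' * p y' z * (f y' - f z)^2)/2) := by
            rw [ENNReal.ofReal_add (mul_nonneg hε.le (sq_nonneg _))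
              (div_nonneg (mul_nonneg hcq.le (sq_nonneg _)) two_pos.le)]
        _ = ENNReal.ofReal (ε * f y' ^ 2)
            + 2⁻¹ * ENNReal.ofReal (μ y' * p y' z * (f y' - f z)^2) := by
            congr 1
            rw [ENNReal.ofReal_div_of_pos two_pos, ENNReal.div_eq_inv_mul]
            norm_num
        _ ≤ dirichletForm μ p f + dirichletForm μ p f := add_le_add hX hY
        _ = 2 * dirichletForm μ p f := (two_mul _).symm
    have h2Z : (2:ℝ≥0∞) * ENNReal.ofReal (ε'/2 * f z ^ 2) = ENNReal.ofReal (ε' * f z ^ 2) := by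
      rw [← ENNReal.ofReal_ofNat 2, ← ENNReal.ofReal_mul (by norm_num : (0:ℝ) ≤ 2)]
      congr 1
      ring
    exact (ENNReal.mul_le_mul_iff_right (a := 2) (by norm_num) (by norm_num)).mp (by rw [h2Z]; exact hZ2)


lemma converse_dir {S : Type*} [Countable S] (μ : S → ℝ) (p : S → S → ℝ)
    (hμ : ∀ x, 0 ≤ μ x) (hμ1 : ∑' x, μ x = 1)
    (hp : ∀ x y, 0 ≤ p x y)
    (hdb : ∀ x y, μ x * p x y = μ y * p y x)
    (ν : S → ℝ) (hν : ∀ x, 0 ≤ ν x) (hνs : Summable ν) (hν1 : ∑' x, ν x = 1)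
    (b : S) (CPI : ℝ≥0∞)
    (hyp : ∀ f : S → ℝ, Summable (fun x => μ x * f x ^ 2) →
        Summable (fun x => ν x * f x) → Summable (fun x => ν x * f x ^ 2) →
        ENNReal.ofReal (rVar ν f) ≤ CPI * dirichletForm μ p f)
    (A : Set S) (hA : A ⊆ {b}ᶜ) :
    ENNReal.ofReal (ν b) * measOf ν A ≤ CPI * capacity μ p A {b} := by
  classical
  have hμs : Summable μ := by
    by_contra hns
    rw [tsum_eq_zero_of_not_summable hns] at hμ1
    norm_num at hμ1
  have hbA : b ∉ A := fun hb => (hA hb) rfl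
  have hd : Disjoint A ({b} : Set S) := by
    rw [Set.disjoint_singleton_right]; exact hbA
  set aR : ℝ := ∑' x : A, ν (x : S) with haR
  have haR0 : 0 ≤ aR := tsum_nonneg (fun x => hν x)
  have hmeasA : measOf ν A = ENNReal.ofReal aR := by
    rw [measOf, haR, ENNReal.ofReal_tsum_of_nonneg (fun x : A => hν (x : S)) (hνs.subtype A)]
  have hsubsum : ∀ T : S → ℝ, Summable T → (∀ x, 0 ≤ T x) →
      (∑' x : ↥(A ∪ {b}), T (x : S)) ≤ ∑' x, T x := by
    intro T hT hT0
    rw [tsum_subtype]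
    exact Summable.tsum_le_tsum (fun x => Set.indicator_le_self' (fun x _ => hT0 x) x)
      (hT.indicator _) hT
  have hA1 : aR + ν b ≤ 1 := by
    have hu := Summable.tsum_union_disjoint (f := ν) hd (hνs.subtype _) (hνs.subtype _)
    rw [tsum_singleton] at hu
    have hle := hsubsum ν hνs hν
    rw [hu] at hle
    rw [← hν1]
    exact hle
  -- The key estimate, for each admissible test function.
  have key : ∀ g : S → ℝ, (∀ x ∈ A, g x = 1) → (∀ x ∈ ({b} : Set S), g x = 0) →
      (∀ x, 0 ≤ g x ∧ g x ≤ 1) →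
      ENNReal.ofReal (ν b) * measOf ν A ≤ CPI * dirichletForm μ p g := by
    intro g hg1 hgb hg01
    have hs1 : Summable (fun x => μ x * g x ^ 2) :=
      Summable.of_nonneg_of_le (fun x => mul_nonneg (hμ x) (sq_nonneg _))
        (fun x => by
          have h2 : g x ^ 2 ≤ 1 := by nlinarith [(hg01 x).1, (hg01 x).2]
          calc μ x * g x ^ 2 ≤ μ x * 1 := mul_le_mul_of_nonneg_left h2 (hμ x)
            _ = μ x := mul_one _) hμs
    have hs2 : Summable (fun x => ν x * g x) :=
      Summable.of_nonneg_of_le (fun x => mul_nonneg (hν x) (hg01 x).1)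
        (fun x => by
          calc ν x * g x ≤ ν x * 1 := mul_le_mul_of_nonneg_left (hg01 x).2 (hν x)
            _ = ν x := mul_one _) hνs
    have hs3 : Summable (fun x => ν x * g x ^ 2) :=
      Summable.of_nonneg_of_le (fun x => mul_nonneg (hν x) (sq_nonneg _))
        (fun x => by
          have h2 : g x ^ 2 ≤ 1 := by nlinarith [(hg01 x).1, (hg01 x).2]
          calc ν x * g x ^ 2 ≤ ν x * 1 := mul_le_mul_of_nonneg_left h2 (hν x)
            _ = ν x := mul_one _) hνs
    have hP := hyp g hs1 hs2 hs3
    set m := rMean ν g with hm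
    have hT : Summable (fun x => ν x * (g x - m)^2) := by
      have he : (fun x => ν x * (g x - m)^2)
          = fun x => (ν x * g x^2 - (2*m) * (ν x * g x)) + m^2 * ν x := by
        funext x; ring
      rw [he]
      exact (hs3.sub (hs2.mul_left (2*m))).add (hνs.mul_left (m^2))
    have hT0 : ∀ x, 0 ≤ ν x * (g x - m)^2 := fun x => mul_nonneg (hν x) (sq_nonneg _)
    have hlow : ν b * aR ≤ rVar ν g := by
      have hsplit : (∑' x : ↥(A ∪ {b}), ν (x:S) * (g (x:S) - m)^2) ≤ rVar ν g := by
        have := hsubsum _ hT hT0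
        rw [rVar, ← hm]
        exact this
      have hunion : (∑' x : ↥(A ∪ {b}), ν (x:S) * (g (x:S) - m)^2)
          = aR * (1 - m)^2 + ν b * (0 - m)^2 := by
        rw [Summable.tsum_union_disjoint (f := fun x => ν x * (g x - m)^2) hd
          (hT.subtype _) (hT.subtype _),
          tsum_singleton b (fun y => ν y * (g y - m)^2)]
        congr 1
        · have : ∀ x : A, ν (x:S) * (g (x:S) - m)^2 = ν (x:S) * ((1:ℝ) - m)^2 := by
            intro x; rw [hg1 x x.2]
          rw [tsum_congr this]
          have : ∀ x : A, ν (x:S) * ((1:ℝ) - m)^2 = ν (x:S) * ((1-m)^2) := fun x => rfl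
          rw [tsum_congr this, tsum_mul_right]
        · rw [hgb b rfl]
      have hb0 : 0 ≤ ν b := hν b
      have hineq : ν b * aR ≤ aR * (1 - m)^2 + ν b * (0 - m)^2 := by
        have iden : (aR + ν b) * (aR * (1 - m)^2 + ν b * (0 - m)^2 - ν b * aR)
            = ((aR + ν b)*m - aR)^2 + ν b * aR * (1 - aR - ν b) := by ring
        rcases eq_or_lt_of_le (add_nonneg haR0 hb0) with hz | hpos
        · have haz : aR = 0 := by linarith
          have hbz : ν b = 0 := by linarith
          rw [haz, hbz]
          nlinarith [sq_nonneg (1-m), sq_nonneg m]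
        · nlinarith [iden, sq_nonneg ((aR + ν b)*m - aR), mul_nonneg (mul_nonneg hb0 haR0)
            (by linarith : (0:ℝ) ≤ 1 - aR - ν b), hpos]
      linarith [hsplit, hunion.symm.le, hineq]
    calc ENNReal.ofReal (ν b) * measOf ν A
        = ENNReal.ofReal (ν b * aR) := by rw [hmeasA, ENNReal.ofReal_mul (hν b)]
      _ ≤ ENNReal.ofReal (rVar ν g) := ENNReal.ofReal_le_ofReal hlow
      _ ≤ CPI * dirichletForm μ p g := hP
  -- default admissible function
  have hadm : (∀ x ∈ A, (fun x => if x = b then (0:ℝ) else 1) x = 1)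
      ∧ (∀ x ∈ ({b} : Set S), (fun x => if x = b then (0:ℝ) else 1) x = 0)
      ∧ ∀ x, 0 ≤ (fun x => if x = b then (0:ℝ) else 1) x
          ∧ (fun x => if x = b then (0:ℝ) else 1) x ≤ 1 := by
    refine ⟨fun x hx => ?_, fun x hx => ?_, fun x => ?_⟩
    · simp only [if_neg (show x ≠ b from fun h => (hA hx) (by simp [h]))]
    · rw [mem_singleton_iff] at hx; simp [hx]
    · by_cases h : x = b <;> simp [h]
  rcases eq_or_ne CPI ⊤ with hCPI | hCPI
  · -- CPI = ∞
    rcases eq_or_ne (capacity μ p A {b}) 0 with hcap0 | hcap0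
    · -- capacity zero : build a zero-energy admissible function via reachability
      have hrsymm : ∀ x y : S, 0 < μ x * p x y → 0 < μ y * p y x := by
        intro x y hxy
        rw [hdb y x]
        exact hxy
      -- every point of A is unreachable from b
      have hunreach : ∀ x ∈ A, ¬ Relation.ReflTransGen (fun x y => 0 < μ x * p x y) b x := by
        intro x hx hreach
        obtain ⟨ε, hε, hind⟩ := reach_pos μ p b x hreach
        have hle : ENNReal.ofReal ε ≤ capacity μ p A {b} := by
          refine le_iInf (fun gs => ?_)
          have h1 := hind gs.1 (gs.2.2.1 b rfl) gs.2.2.2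
          rw [gs.2.1 x hx, one_pow, mul_one] at h1
          exact h1
        rw [hcap0] at hle
        have : ε ≤ 0 := ENNReal.ofReal_eq_zero.mp (le_antisymm hle zero_le)
        linarith
      set g₀ : S → ℝ := fun x =>
        if Relation.ReflTransGen (fun x y => 0 < μ x * p x y) b x then 0 else 1 with hg₀
      have hadm₀1 : ∀ x ∈ A, g₀ x = 1 := fun x hx => by
        simp only [hg₀, if_neg (hunreach x hx)]
      have hadm₀b : ∀ x ∈ ({b}:Set S), g₀ x = 0 := by
        intro x hx
        rw [mem_singleton_iff] at hx
        subst hx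
        simp only [hg₀, if_pos Relation.ReflTransGen.refl]
      have hadm₀r : ∀ x, 0 ≤ g₀ x ∧ g₀ x ≤ 1 := by
        intro x
        simp only [hg₀]
        by_cases h : Relation.ReflTransGen (fun x y => 0 < μ x * p x y) b x <;> simp [h]
      have hzero : dirichletForm μ p g₀ = 0 := by
        have hterm : ∀ q : S × S,
            ENNReal.ofReal (μ q.1 * p q.1 q.2 * (g₀ q.1 - g₀ q.2)^2) = 0 := by
          intro q
          rcases eq_or_lt_of_le (mul_nonneg (hμ q.1) (hp q.1 q.2)) with h0 | hpos
          · rw [← h0, zero_mul]; simp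
          · have hgq : g₀ q.1 = g₀ q.2 := by
              simp only [hg₀]
              by_cases hb1 : Relation.ReflTransGen (fun x y => 0 < μ x * p x y) b q.1
              · rw [if_pos hb1, if_pos (hb1.tail hpos)]
              · rw [if_neg hb1, if_neg (fun hb2 => hb1 (hb2.tail (hrsymm _ _ hpos)))]
            rw [hgq, sub_self]
            simp
        simp only [dirichletForm, hterm, tsum_zero, mul_zero]
      calc ENNReal.ofReal (ν b) * measOf ν A ≤ CPI * dirichletForm μ p g₀ :=
            key g₀ hadm₀1 hadm₀b hadm₀r
        _ = CPI * 0 := by rw [hzero]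
        _ ≤ CPI * capacity μ p A {b} := mul_le_mul_right zero_le _
    · rw [hCPI, ENNReal.top_mul hcap0]
      exact le_top
  · rcases eq_or_ne CPI 0 with hCPI0 | hCPI0
    · have hk := key _ hadm.1 hadm.2.1 hadm.2.2
      rw [hCPI0, zero_mul] at hk
      rw [hCPI0, zero_mul]
      exact hk
    · have hdiv : ∀ gs : {f : S → ℝ // (∀ x ∈ A, f x = 1) ∧ (∀ x ∈ ({b}:Set S), f x = 0)
          ∧ ∀ x, 0 ≤ f x ∧ f x ≤ 1},
          (ENNReal.ofReal (ν b) * measOf ν A) / CPI ≤ dirichletForm μ p gs.1 := by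
        intro gs
        refine (ENNReal.div_le_iff_le_mul (Or.inl hCPI0) (Or.inl hCPI)).mpr ?_
        rw [mul_comm (dirichletForm μ p gs.1) CPI]
        exact key gs.1 gs.2.1 gs.2.2.1 gs.2.2.2
      have hinf : (ENNReal.ofReal (ν b) * measOf ν A) / CPI ≤ capacity μ p A {b} :=
        le_iInf hdiv
      have := mul_le_mul_right hinf CPI
      rwa [ENNReal.mul_div_cancel' (fun h => absurd h hCPI0) (fun h => absurd h hCPI)] at this


/-- Poincaré inequality via measure-capacity comparison: the measure-capacity
inequality `ν[A] ≤ C_var cap(A,{b})` implies `Var_ν[f] ≤ 4 C_var E(f)`; conversely,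
a Poincaré inequality with constant `C_PI` yields `ν(b) ν[A] ≤ C_PI cap(A,{b})`. -/
theorem poincare_via_measure_capacity {S : Type*} [Countable S]
    (μ : S → ℝ) (p : S → S → ℝ)
    (hμ : ∀ x, 0 ≤ μ x) (hμ1 : ∑' x, μ x = 1)
    (hp : ∀ x y, 0 ≤ p x y)
    (hdb : ∀ x y, μ x * p x y = μ y * p y x)
    (ν : S → ℝ) (hν : ∀ x, 0 ≤ ν x) (hνs : Summable ν) (hν1 : ∑' x, ν x = 1)
    (b : S) (Cvar CPI : ℝ≥0∞) :
    ((∀ A : Set S, A ⊆ {b}ᶜ → measOf ν A ≤ Cvar * capacity μ p A {b}) →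
      ∀ f : S → ℝ, Summable (fun x => μ x * f x ^ 2) →
        Summable (fun x => ν x * f x) → Summable (fun x => ν x * f x ^ 2) →
        ENNReal.ofReal (rVar ν f) ≤ 4 * Cvar * dirichletForm μ p f)
    ∧
    ((∀ f : S → ℝ, Summable (fun x => μ x * f x ^ 2) →
        Summable (fun x => ν x * f x) → Summable (fun x => ν x * f x ^ 2) →
        ENNReal.ofReal (rVar ν f) ≤ CPI * dirichletForm μ p f) →
      ∀ A : Set S, A ⊆ {b}ᶜ →
        ENNReal.ofReal (ν b) * measOf ν A ≤ CPI * capacity μ p A {b}) := by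
  constructor
  · intro hcap f _ hνf hνf2
    exact forward_dir μ p hμ hp ν hν hνs hν1 b Cvar hcap f hνf hνf2
  · intro hyp A hA
    exact converse_dir μ p hμ hμ1 hp hdb ν hν hνs hν1 b CPI hyp A hA
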